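/- Let H be a Hilbert space, T ∈ B(H) a partial isometry, α(a) := T a T*, and M ⊆ B(H) a self-adjoint subset (M* = M). The following are equivalent: (i) T*T commutes with every element of M; (ii) T a = α(a) T for every a ∈ M; (iii) a T* = T* α(a) for every a ∈ M; (iv) α(ab) = α(a)α(b) for all a, b ∈ M. -/
import Mathlib


open ContinuousLinearMap

/-- For a partial isometry `T` on a Hilbert space, `α(a) = T a T*`, and a
self-adjoint set `M`, the conditions (i) `T*T ∈ M'`, (ii) `T a = α(a) T` on `M`,
(iii) `a T* = T* α(a)` on `M`, and (iv) multiplicativity of `α` on `M` are equivalent. -/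
theorem stmt6 {H : Type*} [NormedAddCommGroup H] [InnerProductSpace ℂ H] [CompleteSpace H]
    (T : H →L[ℂ] H) (hT : T * adjoint T * T = T)
    (M : Set (H →L[ℂ] H)) (hM : ∀ a ∈ M, adjoint a ∈ M) :
    ((∀ a ∈ M, (adjoint T * T) * a = a * (adjoint T * T)) ↔
      (∀ a ∈ M, T * a = (T * a * adjoint T) * T)) ∧
    ((∀ a ∈ M, (adjoint T * T) * a = a * (adjoint T * T)) ↔
      (∀ a ∈ M, a * adjoint T = adjoint T * (T * a * adjoint T))) ∧
    ((∀ a ∈ M, (adjoint T * T) * a = a * (adjoint T * T)) ↔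
      (∀ a ∈ M, ∀ b ∈ M,
        T * (a * b) * adjoint T = (T * a * adjoint T) * (T * b * adjoint T))) := by
  simp only [← ContinuousLinearMap.star_eq_adjoint] at hT hM ⊢
  -- `hT'` : the starred partial-isometry identity
  have hT' : star T * T * star T = star T := by
    have := congrArg star hT
    simp only [star_mul, star_star] at this
    calc star T * T * star T = star T * (T * star T) := by noncomm_ring
      _ = star T := this
  -- `Q = star T * T` is idempotent
  have hQ : (star T * T) * (star T * T) = star T * T := by
    calc (star T * T) * (star T * T) = star T * (T * star T * T) := by noncomm_ring
      _ = star T * T := by rw [hT]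
  -- (i) → (ii)
  have h12 : (∀ a ∈ M, (star T * T) * a = a * (star T * T)) →
      ∀ a ∈ M, T * a = (T * a * star T) * T := by
    intro hi a ha
    calc T * a = T * ((star T * T) * a) := by rw [← mul_assoc, ← mul_assoc, hT]
      _ = T * (a * (star T * T)) := by rw [hi a ha]
      _ = (T * a * star T) * T := by noncomm_ring
  -- (ii) → (i)
  have h21 : (∀ a ∈ M, T * a = (T * a * star T) * T) →
      ∀ a ∈ M, (star T * T) * a = a * (star T * T) := by
    intro hii a ha
    have e1 := hii a ha
    have e2 := congrArg star (hii (star a) (hM a ha))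
    simp only [star_mul, star_star] at e2
    -- e2 : a * star T = star T * ((star T)⋆ ...) ; normalize it
    have e3 : a * (star T * T) = (star T * T) * (a * (star T * T)) := by
      calc a * (star T * T) = star (T * star a) * T := by
            simp only [star_mul, star_star]; try noncomm_ring
        _ = star ((T * star a * star T) * T) * T := by
            conv_lhs => rw [hii (star a) (hM a ha)]
        _ = (star T * T) * (a * (star T * T)) := by
            simp only [star_mul, star_star]; try noncomm_ring
    have e4 : (star T * T) * a = (star T * T) * (a * (star T * T)) := by
      calc (star T * T) * a = star T * (T * a) := by noncomm_ring
        _ = star T * ((T * a * star T) * T) := by rw [← e1]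
        _ = (star T * T) * (a * (star T * T)) := by noncomm_ring
    exact e4.trans e3.symm
  -- (i) → (iii)
  have h13 : (∀ a ∈ M, (star T * T) * a = a * (star T * T)) →
      ∀ a ∈ M, a * star T = star T * (T * a * star T) := by
    intro hi a ha
    calc a * star T = a * (star T * T * star T) := by rw [hT']
      _ = (a * (star T * T)) * star T := by noncomm_ring
      _ = ((star T * T) * a) * star T := by rw [hi a ha]
      _ = star T * (T * a * star T) := by noncomm_ring
  -- (iii) → (i)
  have h31 : (∀ a ∈ M, a * star T = star T * (T * a * star T)) →
      ∀ a ∈ M, (star T * T) * a = a * (star T * T) := by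
    intro hiii a ha
    have e3 : a * (star T * T) = (star T * T) * (a * (star T * T)) := by
      calc a * (star T * T) = (a * star T) * T := by noncomm_ring
        _ = (star T * (T * a * star T)) * T := by rw [hiii a ha]
        _ = (star T * T) * (a * (star T * T)) := by noncomm_ring
    have e4 : (star T * T) * a = (star T * T) * (a * (star T * T)) := by
      calc (star T * T) * a = star T * star (star a * star T) := by
            simp only [star_mul, star_star]; try noncomm_ring
        _ = star T * star (star T * (T * star a * star T)) := by
            rw [hiii (star a) (hM a ha)]
        _ = (star T * T) * (a * (star T * T)) := by
            simp only [star_mul, star_star]; try noncomm_ring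
    exact e4.trans e3.symm
  -- (i) → (iv)
  have h14 : (∀ a ∈ M, (star T * T) * a = a * (star T * T)) →
      ∀ a ∈ M, ∀ b ∈ M,
        T * (a * b) * star T = (T * a * star T) * (T * b * star T) := by
    intro hi a ha b hb
    calc T * (a * b) * star T = T * a * (b * (star T * T * star T)) := by
          rw [hT']; noncomm_ring
      _ = T * a * ((b * (star T * T)) * star T) := by noncomm_ring
      _ = T * a * (((star T * T) * b) * star T) := by rw [hi b hb]
      _ = (T * a * star T) * (T * b * star T) := by noncomm_ring
  -- (iv) → (i)
  have h41 : (∀ a ∈ M, ∀ b ∈ M,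
        T * (a * b) * star T = (T * a * star T) * (T * b * star T)) →
      ∀ a ∈ M, (star T * T) * a = a * (star T * T) := by
    intro hiv
    -- key step: for every a ∈ M, `a * Q  = Q * a * Q` where Q = star T * T
    have key : ∀ a ∈ M, a * (star T * T) = (star T * T) * a * (star T * T) := by
      intro a ha
      set X : H →L[ℂ] H := a * star T - (star T * T) * (a * star T) with hX
      have hzero : star X * X = 0 := by
        have h4 := hiv (star a) (hM a ha) a ha
        calc star X * X
            = (T * (star a * a) * star T - (T * star a * star T) * (T * a * star T))
              + (T * star a) * ((star T * T) * (star T * T) - star T * T) *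
                (a * star T) := by
              simp only [hX, star_sub, star_mul, star_star]; try noncomm_ring
          _ = 0 := by rw [hQ, h4]; simp
      have hX0 : a * star T - star T * T * (a * star T) = 0 := by
        rw [← hX]; rwa [CStarRing.star_mul_self_eq_zero_iff] at hzero
      have hXeq : a * star T = star T * T * (a * star T) := sub_eq_zero.mp hX0
      calc a * (star T * T) = (a * star T) * T := by noncomm_ring
        _ = (star T * T * (a * star T)) * T := by conv_lhs => rw [hXeq]
        _ = (star T * T) * a * (star T * T) := by noncomm_ring
    intro a ha
    have e1 := key a ha
    have e3 : (star T * T) * a = (star T * T) * a * (star T * T) := by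
      calc (star T * T) * a = star (star a * (star T * T)) := by
            simp only [star_mul, star_star]; try noncomm_ring
        _ = star ((star T * T) * star a * (star T * T)) := by
            conv_lhs => rw [key (star a) (hM a ha)]
        _ = (star T * T) * a * (star T * T) := by
            simp only [star_mul, star_star]; try noncomm_ring
    exact e3.trans e1.symm
  exact ⟨⟨h12, h21⟩, ⟨h13, h31⟩, ⟨h14, h41⟩⟩
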